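/- Let Φ be a Young function, w a weight, φ : ℝⁿ×(0,∞) → (0,∞) in the class 𝒢_Φ^w, and B₀ = B(x₀,r₀) a ball. Then the norm of χ_{B₀} in the generalized weighted Orlicz–Morrey space satisfies 1/φ(B₀) ≤ ‖χ_{B₀}‖_{M^{Φ,φ}_w} ≤ C/φ(B₀) for a constant C > 0 depending only on the constants in the definition of 𝒢_Φ^w. -/

import Mathlib

open scoped ENNReal NNReal
open MeasureTheory Filter Set

/-- A Young function `Φ : [0,∞) → [0,∞]`: convex, left-continuous, `Φ(0)=0`,
`Φ(r) → 0` as `r → 0⁺`, and `Φ(r) → ∞` as `r → ∞`. -/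
structure YoungFunction where
  toFun : ℝ≥0 → ℝ≥0∞
  convex' : ∀ (a b t : ℝ≥0), t ≤ 1 →
    toFun (t * a + (1 - t) * b) ≤ (t : ℝ≥0∞) * toFun a + ((1 - t : ℝ≥0) : ℝ≥0∞) * toFun b
  leftContinuous' : ∀ r : ℝ≥0, ContinuousWithinAt toFun (Set.Iic r) r
  map_zero' : toFun 0 = 0
  tendsto_zero' : Filter.Tendsto toFun (nhdsWithin 0 (Set.Ioi 0)) (nhds 0)
  tendsto_top' : Filter.Tendsto toFun Filter.atTop (nhds ⊤)

/-- Generalized inverse `Φ⁻¹(s) = inf {r ≥ 0 : Φ(r) > s}` (with `inf ∅ = ∞`). -/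
noncomputable def yInv (Φ : ℝ≥0 → ℝ≥0∞) (s : ℝ≥0∞) : ℝ≥0∞ :=
  sInf {t : ℝ≥0∞ | ∃ r : ℝ≥0, t = (r : ℝ≥0∞) ∧ s < Φ r}

/-- Complementary Young function `Φ̃(r) = sup {rs − Φ(s) : s ≥ 0}`. -/
noncomputable def yCompl (Φ : ℝ≥0 → ℝ≥0∞) : ℝ≥0 → ℝ≥0∞ :=
  fun r => ⨆ s : ℝ≥0, (((r * s : ℝ≥0) : ℝ≥0∞) - Φ s)

/-- The `Δ₂` condition. -/
def Delta2 (Φ : ℝ≥0 → ℝ≥0∞) : Prop :=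
  ∃ k : ℝ≥0, 1 < k ∧ ∀ r : ℝ≥0, 0 < r → Φ (2 * r) ≤ (k : ℝ≥0∞) * Φ r

/-- The `∇₂` condition. -/
def Nabla2 (Φ : ℝ≥0 → ℝ≥0∞) : Prop :=
  ∃ k : ℝ≥0, 1 < k ∧ ∀ r : ℝ≥0, Φ r ≤ Φ (k * r) / ((2 * k : ℝ≥0) : ℝ≥0∞)

/-- `Φ` is of upper type `p`. -/
def IsUpperType (Φ : ℝ≥0 → ℝ≥0∞) (p : ℝ) : Prop :=
  ∃ C : ℝ≥0, 0 < C ∧ ∀ (s t : ℝ≥0), 1 ≤ t → Φ (s * t) ≤ ((C * t ^ p : ℝ≥0) : ℝ≥0∞) * Φ s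

/-- `Φ` is of lower type `p`. -/
def IsLowerType (Φ : ℝ≥0 → ℝ≥0∞) (p : ℝ) : Prop :=
  ∃ C : ℝ≥0, 0 < C ∧ ∀ (s t : ℝ≥0), t ≤ 1 → Φ (s * t) ≤ ((C * t ^ p : ℝ≥0) : ℝ≥0∞) * Φ s

/-- The weighted Orlicz (Luxemburg) norm
`‖f‖ = inf {λ > 0 : ∫ Φ(|f(x)|/λ) w(x) dx ≤ 1}`. -/
noncomputable def luxNorm (n : ℕ) (Φ : ℝ≥0 → ℝ≥0∞) (w : (Fin n → ℝ) → ℝ≥0∞)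
    (f : (Fin n → ℝ) → ℝ) : ℝ≥0∞ :=
  sInf {l : ℝ≥0∞ | ∃ lam : ℝ≥0, 0 < lam ∧ l = (lam : ℝ≥0∞) ∧
    (∫⁻ x, Φ (‖f x‖₊ / lam) * w x) ≤ 1}

/-- The weak weighted Orlicz norm
`‖f‖ = inf {λ > 0 : sup_{t>0} Φ(t) · w({x : |f(x)|/λ > t}) ≤ 1}`. -/
noncomputable def weakLuxNorm (n : ℕ) (Φ : ℝ≥0 → ℝ≥0∞) (w : (Fin n → ℝ) → ℝ≥0∞)
    (f : (Fin n → ℝ) → ℝ) : ℝ≥0∞ :=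
  sInf {l : ℝ≥0∞ | ∃ lam : ℝ≥0, 0 < lam ∧ l = (lam : ℝ≥0∞) ∧
    ∀ t : ℝ≥0, 0 < t → Φ t * (∫⁻ x in {x | t < ‖f x‖₊ / lam}, w x) ≤ 1}

/-- The weight of a ball, `w(B) = ∫_B w`. -/
noncomputable def wBall (n : ℕ) (w : (Fin n → ℝ) → ℝ≥0∞) (x : Fin n → ℝ) (r : ℝ) : ℝ≥0∞ :=
  ∫⁻ y in Metric.ball x r, w y

/-- The Muckenhoupt `A₁` condition. -/
def IsA1 (n : ℕ) (w : (Fin n → ℝ) → ℝ≥0∞) : Prop :=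
  ∃ C : ℝ≥0∞, C < ⊤ ∧ ∀ (x : Fin n → ℝ) (r : ℝ), 0 < r →
    ∀ᵐ y ∂(MeasureTheory.volume.restrict (Metric.ball x r)),
      wBall n w x r / MeasureTheory.volume (Metric.ball x r) ≤ C * w y

/-- The Muckenhoupt `A_p` condition for `1 < p < ∞`. -/
def IsAp (n : ℕ) (w : (Fin n → ℝ) → ℝ≥0∞) (p : ℝ) : Prop :=
  ∃ C : ℝ≥0∞, C < ⊤ ∧ ∀ (x : Fin n → ℝ) (r : ℝ), 0 < r →
    (wBall n w x r / MeasureTheory.volume (Metric.ball x r)) *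
      ((∫⁻ y in Metric.ball x r, (w y) ^ (-(p - 1)⁻¹)) /
        MeasureTheory.volume (Metric.ball x r)) ^ (p - 1) ≤ C

/-- The Muckenhoupt `A_∞` class: `A_∞ = ⋃_{p ≥ 1} A_p`. -/
def IsAinf (n : ℕ) (w : (Fin n → ℝ) → ℝ≥0∞) : Prop :=
  IsA1 n w ∨ ∃ p : ℝ, 1 < p ∧ IsAp n w p

/-- The generalized weighted Orlicz–Morrey norm
`‖f‖ = sup_{B} φ(B)⁻¹ Φ⁻¹(w(B)⁻¹) ‖f‖_{L^Φ_w(B)}`. -/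
noncomputable def morreyNorm (n : ℕ) (Φ : ℝ≥0 → ℝ≥0∞) (w : (Fin n → ℝ) → ℝ≥0∞)
    (φ : (Fin n → ℝ) → ℝ → ℝ≥0∞) (f : (Fin n → ℝ) → ℝ) : ℝ≥0∞ :=
  ⨆ (x : Fin n → ℝ) (r : ℝ) (_ : 0 < r),
    (φ x r)⁻¹ * yInv Φ ((wBall n w x r)⁻¹) *
      luxNorm n Φ w ((Metric.ball x r).indicator f)

lemma yf_mono (Φ : YoungFunction) : Monotone Φ.toFun := by
  intro a b hab
  rcases eq_or_ne b 0 with hb | hb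
  · have ha : a = 0 := le_antisymm (hb ▸ hab) zero_le
    simp [ha, hb]
  · have hb' : 0 < b := pos_iff_ne_zero.mpr hb
    have ht : a / b ≤ 1 := (div_le_one hb').mpr hab
    have h := Φ.convex' b 0 (a / b) ht
    rw [mul_zero, add_zero, div_mul_cancel₀ a hb, Φ.map_zero', mul_zero, add_zero] at h
    calc Φ.toFun a ≤ ((a / b : ℝ≥0) : ℝ≥0∞) * Φ.toFun b := h
      _ ≤ 1 * Φ.toFun b := by
          exact mul_le_mul_left (by exact_mod_cast ht) _
      _ = Φ.toFun b := one_mul _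

lemma yInv_lt_top (Φ : YoungFunction) {s : ℝ≥0∞} (hs : s < ⊤) : yInv Φ.toFun s < ⊤ := by
  have h : ∀ᶠ r in atTop, Φ.toFun r ∈ Ioi s := Φ.tendsto_top'.eventually (Ioi_mem_nhds hs)
  obtain ⟨r, hr⟩ := h.exists
  exact lt_of_le_of_lt (sInf_le ⟨r, rfl, hr⟩) (ENNReal.coe_lt_top)

lemma yInv_pos (Φ : YoungFunction) {s : ℝ≥0∞} (hs : 0 < s) : 0 < yInv Φ.toFun s := by
  have h : ∀ᶠ r in nhdsWithin 0 (Ioi 0), Φ.toFun r ∈ Iio s :=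
    Φ.tendsto_zero'.eventually (Iio_mem_nhds hs)
  rw [eventually_nhdsWithin_iff] at h
  obtain ⟨δ, hδ, hδ'⟩ := NNReal.nhds_zero_basis.eventually_iff.mp h
  have : (δ : ℝ≥0∞) ≤ yInv Φ.toFun s := by
    refine le_sInf ?_
    rintro t ⟨r, rfl, hr⟩
    by_contra hlt
    push_neg at hlt
    have hrδ : r < δ := by exact_mod_cast hlt
    rcases eq_or_ne r 0 with h0 | h0
    · rw [h0, Φ.map_zero'] at hr; exact (not_lt_of_ge (zero_le (a := s))).elim hr -- s < 0 false
    · exact absurd hr (not_lt_of_ge (le_of_lt (hδ' hrδ (pos_iff_ne_zero.mpr h0))))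
  exact lt_of_lt_of_le (by exact_mod_cast hδ) this

-- pointwise identity
lemma indicator_integrand (Φ : YoungFunction) (n : ℕ) (w : (Fin n → ℝ) → ℝ≥0∞)
    (E : Set (Fin n → ℝ)) (lam : ℝ≥0) (x : Fin n → ℝ) :
    Φ.toFun (‖(E.indicator (fun _ => (1:ℝ))) x‖₊ / lam) * w x
      = E.indicator (fun y => Φ.toFun (1 / lam) * w y) x := by
  by_cases hx : x ∈ E
  · simp [hx]
  · simp [hx, Φ.map_zero']

lemma lux_indicator_le (Φ : YoungFunction) (n : ℕ) (w : (Fin n → ℝ) → ℝ≥0∞)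
    {E : Set (Fin n → ℝ)} (hE : MeasurableSet E)
    (hwE : 0 < ∫⁻ x in E, w x) (hwE' : (∫⁻ x in E, w x) < ⊤) :
    luxNorm n Φ.toFun w (E.indicator (fun _ => (1:ℝ))) ≤ (yInv Φ.toFun (∫⁻ x in E, w x)⁻¹)⁻¹ := by
  set s : ℝ≥0∞ := (∫⁻ x in E, w x)⁻¹ with hs
  have hs0 : 0 < s := ENNReal.inv_pos.mpr hwE'.ne
  have hstop : s < ⊤ := ENNReal.inv_lt_top.mpr hwE
  set u := yInv Φ.toFun s with hu
  have hu0 : 0 < u := yInv_pos Φ hs0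
  have hutop : u < ⊤ := yInv_lt_top Φ hstop
  by_contra hcon
  push_neg at hcon
  obtain ⟨lam, h1, h2⟩ := ENNReal.lt_iff_exists_nnreal_btwn.mp hcon
  have hlam0 : 0 < lam := by
    have : (0:ℝ≥0∞) < lam := lt_of_le_of_lt zero_le h1
    exact_mod_cast this
  -- 1/lam < u
  have hinv : ((1 / lam : ℝ≥0) : ℝ≥0∞) < u := by
    rw [one_div, ENNReal.coe_inv hlam0.ne']
    rw [← ENNReal.inv_lt_inv] at h1
    simpa using lt_of_lt_of_le h1 (by simp)
  have hΦ : Φ.toFun (1 / lam) ≤ s := by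
    by_contra hgt
    push_neg at hgt
    exact absurd (sInf_le ⟨1 / lam, rfl, hgt⟩ : u ≤ _) (not_le_of_gt hinv)
  have hint : (∫⁻ x, Φ.toFun (‖(E.indicator (fun _ => (1:ℝ))) x‖₊ / lam) * w x) ≤ 1 := by
    calc (∫⁻ x, Φ.toFun (‖(E.indicator (fun _ => (1:ℝ))) x‖₊ / lam) * w x)
        = ∫⁻ x, E.indicator (fun y => Φ.toFun (1 / lam) * w y) x := by
          exact lintegral_congr (indicator_integrand Φ n w E lam)
      _ = ∫⁻ x in E, Φ.toFun (1 / lam) * w x := lintegral_indicator hE _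
      _ ≤ ∫⁻ x in E, s * w x := lintegral_mono fun x => mul_le_mul_left hΦ _
      _ = s * ∫⁻ x in E, w x := lintegral_const_mul' _ _ hstop.ne
      _ = 1 := ENNReal.inv_mul_cancel hwE.ne' hwE'.ne
  exact absurd (sInf_le ⟨lam, hlam0, rfl, hint⟩ : luxNorm n Φ.toFun w _ ≤ _)
    (not_le_of_gt h2)

lemma lux_indicator_ge (Φ : YoungFunction) (n : ℕ) (w : (Fin n → ℝ) → ℝ≥0∞)
    {E : Set (Fin n → ℝ)} (hE : MeasurableSet E)
    (hwE : 0 < ∫⁻ x in E, w x) (hwE' : (∫⁻ x in E, w x) < ⊤) :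
    (yInv Φ.toFun (∫⁻ x in E, w x)⁻¹)⁻¹ ≤ luxNorm n Φ.toFun w (E.indicator (fun _ => (1:ℝ))) := by
  set s : ℝ≥0∞ := (∫⁻ x in E, w x)⁻¹ with hs
  set u := yInv Φ.toFun s with hu
  refine le_sInf ?_
  rintro l ⟨lam, hlam0, rfl, hint⟩
  -- Φ(1/lam) * wE ≤ 1
  have key : Φ.toFun (1 / lam) * (∫⁻ x in E, w x) ≤ 1 := by
    calc Φ.toFun (1 / lam) * (∫⁻ x in E, w x)
        ≤ ∫⁻ x in E, Φ.toFun (1 / lam) * w x := lintegral_const_mul_le _ _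
      _ = ∫⁻ x, E.indicator (fun y => Φ.toFun (1 / lam) * w y) x := (lintegral_indicator hE _).symm
      _ = ∫⁻ x, Φ.toFun (‖(E.indicator (fun _ => (1:ℝ))) x‖₊ / lam) * w x :=
          (lintegral_congr (indicator_integrand Φ n w E lam)).symm
      _ ≤ 1 := hint
  have hΦle : Φ.toFun (1 / lam) ≤ s := ENNReal.le_inv_iff_mul_le.mpr key
  -- for each r with s < Φ r, lam⁻¹ ≤ r
  have hle : ((lam⁻¹ : ℝ≥0) : ℝ≥0∞) ≤ u := by
    refine le_sInf ?_
    rintro t ⟨r, rfl, hr⟩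
    have : ¬ r ≤ 1 / lam := fun hc =>
      absurd (le_trans ((yf_mono Φ) hc) hΦle) (not_le_of_gt hr)
    push_neg at this
    rw [one_div] at this
    exact_mod_cast this.le
  rw [ENNReal.coe_inv hlam0.ne'] at hle
  calc u⁻¹ ≤ (((lam : ℝ≥0∞))⁻¹)⁻¹ := ENNReal.inv_le_inv.mpr hle
    _ = (lam : ℝ≥0∞) := inv_inv _

lemma lux_mono_indicator (Φ : YoungFunction) (n : ℕ) (w : (Fin n → ℝ) → ℝ≥0∞)
    {E' E : Set (Fin n → ℝ)} (hsub : E' ⊆ E) :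
    luxNorm n Φ.toFun w (E'.indicator (fun _ => (1:ℝ))) ≤
      luxNorm n Φ.toFun w (E.indicator (fun _ => (1:ℝ))) := by
  refine sInf_le_sInf ?_
  rintro l ⟨lam, hlam0, rfl, hint⟩
  refine ⟨lam, hlam0, rfl, le_trans (lintegral_mono fun x => ?_) hint⟩
  rw [div_eq_mul_inv, div_eq_mul_inv]
  refine mul_le_mul_left (yf_mono Φ (mul_le_mul_left ?_ _)) _
  by_cases hx : x ∈ E'
  · simp [hx, hsub hx]
  · simp [hx]

/-- If `φ ∈ 𝒢_Φ^w`, then `1/φ(B₀) ≤ ‖χ_{B₀}‖_{M^{Φ,φ}_w} ≤ C/φ(B₀)` with `C` depending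
only on the constants in the definition of `𝒢_Φ^w`. -/
theorem morreyNorm_indicator_ball (n : ℕ) (Φ : YoungFunction)
    (w : (Fin n → ℝ) → ℝ≥0∞) (φ : (Fin n → ℝ) → ℝ → ℝ≥0∞)
    (hφ : ∀ (x : Fin n → ℝ) (r : ℝ), 0 < r → 0 < φ x r ∧ φ x r < ⊤)
    (hw : ∀ (x : Fin n → ℝ) (r : ℝ), 0 < r → 0 < wBall n w x r ∧ wBall n w x r < ⊤)
    (c₁ : ℝ≥0∞) (hc₁ : 0 < c₁)
    (hG₁ : ∀ (x : Fin n → ℝ) (r : ℝ) (x₀ : Fin n → ℝ) (r₀ : ℝ), 0 < r → 0 < r₀ → r ≤ r₀ →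
      c₁ * φ x₀ r₀ ≤ φ x r)
    (c₂ : ℝ≥0∞) (hc₂ : 0 < c₂)
    (hG₂ : ∀ (x : Fin n → ℝ) (r : ℝ) (x₀ : Fin n → ℝ) (r₀ : ℝ), 0 < r → 0 < r₀ → r₀ ≤ r →
      c₂ * (φ x₀ r₀ / yInv Φ.toFun ((wBall n w x₀ r₀)⁻¹)) ≤
        φ x r / yInv Φ.toFun ((wBall n w x r)⁻¹)) :
    ∃ C : ℝ≥0∞, 0 < C ∧ C < ⊤ ∧ ∀ (x₀ : Fin n → ℝ) (r₀ : ℝ), 0 < r₀ →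
      (φ x₀ r₀)⁻¹ ≤
          morreyNorm n Φ.toFun w φ ((Metric.ball x₀ r₀).indicator fun _ => (1 : ℝ)) ∧
        morreyNorm n Φ.toFun w φ ((Metric.ball x₀ r₀).indicator fun _ => (1 : ℝ)) ≤
          C * (φ x₀ r₀)⁻¹ := by
  
  classical
  -- positivity/finiteness of yInv at every ball
  have hu : ∀ (x : Fin n → ℝ) (r : ℝ), 0 < r →
      0 < yInv Φ.toFun ((wBall n w x r)⁻¹) ∧ yInv Φ.toFun ((wBall n w x r)⁻¹) < ⊤ :=
    fun x r hr =>
      ⟨yInv_pos Φ (ENNReal.inv_pos.mpr (hw x r hr).2.ne),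
       yInv_lt_top Φ (ENNReal.inv_lt_top.mpr (hw x r hr).1)⟩
  -- c₁ ≤ 1
  have hφ1 := hφ 0 1 one_pos
  have hu1 := hu 0 1 one_pos
  have hc₁1 : c₁ ≤ 1 := by
    have h := hG₁ 0 1 0 1 one_pos one_pos le_rfl
    exact (ENNReal.mul_le_mul_iff_left hφ1.1.ne' hφ1.2.ne).mp (h.trans_eq (one_mul _).symm)
  -- c₂ ≤ 1
  have hc₂1 : c₂ ≤ 1 := by
    have h := hG₂ 0 1 0 1 one_pos one_pos le_rfl
    have hq0 : 0 < φ 0 1 / yInv Φ.toFun ((wBall n w 0 1)⁻¹) :=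
      ENNReal.div_pos hφ1.1.ne' hu1.2.ne
    have hqt : φ 0 1 / yInv Φ.toFun ((wBall n w 0 1)⁻¹) < ⊤ :=
      ENNReal.div_lt_top hφ1.2.ne hu1.1.ne'
    exact (ENNReal.mul_le_mul_iff_left hq0.ne' hqt.ne).mp (h.trans_eq (one_mul _).symm)
  have hc₁t : c₁ < ⊤ := lt_of_le_of_lt hc₁1 ENNReal.one_lt_top
  have hc₂t : c₂ < ⊤ := lt_of_le_of_lt hc₂1 ENNReal.one_lt_top
  refine ⟨max c₁⁻¹ c₂⁻¹, lt_of_lt_of_le (ENNReal.inv_pos.mpr hc₁t.ne) (le_max_left _ _),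
    max_lt (ENNReal.inv_lt_top.mpr hc₁) (ENNReal.inv_lt_top.mpr hc₂), ?_⟩
  intro x₀ r₀ hr₀
  have hw₀ := hw x₀ r₀ hr₀
  have hu₀ := hu x₀ r₀ hr₀
  set u₀ := yInv Φ.toFun ((wBall n w x₀ r₀)⁻¹) with hu₀def
  constructor
  · -- lower bound
    have h1 : u₀⁻¹ ≤ luxNorm n Φ.toFun w ((Metric.ball x₀ r₀).indicator fun _ => (1:ℝ)) :=
      lux_indicator_ge Φ n w measurableSet_ball hw₀.1 hw₀.2
    calc (φ x₀ r₀)⁻¹ = (φ x₀ r₀)⁻¹ * u₀ * u₀⁻¹ := by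
          rw [mul_assoc, ENNReal.mul_inv_cancel hu₀.1.ne' hu₀.2.ne, mul_one]
      _ ≤ (φ x₀ r₀)⁻¹ * u₀ *
            luxNorm n Φ.toFun w
              ((Metric.ball x₀ r₀).indicator ((Metric.ball x₀ r₀).indicator fun _ => (1:ℝ))) := by
          rw [Set.indicator_indicator, Set.inter_self]
          exact mul_le_mul_right h1 _
      _ ≤ morreyNorm n Φ.toFun w φ ((Metric.ball x₀ r₀).indicator fun _ => (1 : ℝ)) :=
          le_iSup_of_le x₀ (le_iSup_of_le r₀ (le_iSup_of_le hr₀ le_rfl))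
  · -- upper bound
    refine iSup_le fun x => iSup_le fun r => iSup_le fun hr => ?_
    have hwB := hw x r hr
    have huB := hu x r hr
    set uB := yInv Φ.toFun ((wBall n w x r)⁻¹) with huBdef
    rw [Set.indicator_indicator]
    rcases le_total r r₀ with hrr | hrr
    · -- small ball: use hG₁
      have hlux : luxNorm n Φ.toFun w ((Metric.ball x r ∩ Metric.ball x₀ r₀).indicator
            fun _ => (1:ℝ)) ≤ uB⁻¹ :=
        le_trans (lux_mono_indicator Φ n w Set.inter_subset_left)
          (lux_indicator_le Φ n w measurableSet_ball hwB.1 hwB.2)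
      calc (φ x r)⁻¹ * uB * _ ≤ (φ x r)⁻¹ * uB * uB⁻¹ := mul_le_mul_right hlux _
        _ = (φ x r)⁻¹ := by
            rw [mul_assoc, ENNReal.mul_inv_cancel huB.1.ne' huB.2.ne, mul_one]
        _ ≤ (c₁ * φ x₀ r₀)⁻¹ := ENNReal.inv_le_inv.mpr (hG₁ x r x₀ r₀ hr hr₀ hrr)
        _ = c₁⁻¹ * (φ x₀ r₀)⁻¹ := ENNReal.mul_inv (Or.inl hc₁.ne') (Or.inl hc₁t.ne)
        _ ≤ max c₁⁻¹ c₂⁻¹ * (φ x₀ r₀)⁻¹ := mul_le_mul_left (le_max_left _ _) _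
    · -- large ball: use hG₂
      have hφ₀ := hφ x₀ r₀ hr₀
      have hφB := hφ x r hr
      have hlux : luxNorm n Φ.toFun w ((Metric.ball x r ∩ Metric.ball x₀ r₀).indicator
            fun _ => (1:ℝ)) ≤ u₀⁻¹ :=
        le_trans (lux_mono_indicator Φ n w Set.inter_subset_right)
          (lux_indicator_le Φ n w measurableSet_ball hw₀.1 hw₀.2)
      have h2 := hG₂ x r x₀ r₀ hr hr₀ hrr
      have h3 : (φ x r)⁻¹ * uB ≤ c₂⁻¹ * (u₀ * (φ x₀ r₀)⁻¹) := by
        have h4 : (φ x r / uB)⁻¹ ≤ (c₂ * (φ x₀ r₀ / u₀))⁻¹ := ENNReal.inv_le_inv.mpr h2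
        rw [ENNReal.inv_div (Or.inl huB.2.ne) (Or.inl huB.1.ne'),
          ENNReal.mul_inv (Or.inl hc₂.ne') (Or.inl hc₂t.ne),
          ENNReal.inv_div (Or.inl hu₀.2.ne) (Or.inl hu₀.1.ne')] at h4
        calc (φ x r)⁻¹ * uB = uB / φ x r := by rw [mul_comm, div_eq_mul_inv]
          _ ≤ c₂⁻¹ * (u₀ / φ x₀ r₀) := h4
          _ = c₂⁻¹ * (u₀ * (φ x₀ r₀)⁻¹) := by rw [div_eq_mul_inv]
      calc (φ x r)⁻¹ * uB * _ ≤ c₂⁻¹ * (u₀ * (φ x₀ r₀)⁻¹) * u₀⁻¹ := mul_le_mul' h3 hlux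
        _ = c₂⁻¹ * (φ x₀ r₀)⁻¹ := by
            rw [mul_assoc, mul_comm u₀, mul_assoc, ENNReal.mul_inv_cancel hu₀.1.ne' hu₀.2.ne,
              mul_one]
        _ ≤ max c₁⁻¹ c₂⁻¹ * (φ x₀ r₀)⁻¹ := mul_le_mul_left (le_max_right _ _) _
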